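/- The path-integral value function solves the discrete Poisson equation: for the canonical Markov chain on a connected weighted graph (G, λ) and any edge flow f ∈ ℓ²(E), the function T ↦ V_f^S(T) satisfies d*d V_f^S = d* f on the connected component containing S. -/

import Mathlib

open Finset

variable {Ξ : Type*}

/-- Transition probability of the canonical Markov chain associated to the
edge weight `lam`: `p(S,T) = λ(S,T) / Σ_U λ(S,U)`. -/
noncomputable def transProb [Fintype Ξ] (lam : Ξ → Ξ → ℝ) (S T : Ξ) : ℝ :=
  lam S T / ∑ U : Ξ, lam S U

/-- Probability of a finite path `x : Fin (n+1) → Ξ` under the canonical chain. -/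
noncomputable def pathProb [Fintype Ξ] (lam : Ξ → Ξ → ℝ) {n : ℕ}
    (x : Fin (n + 1) → Ξ) : ℝ :=
  ∏ k : Fin n, transProb lam (x k.castSucc) (x k.succ)

/-- The path integral of an edge flow `f` along a finite path. -/
def pathSum (f : Ξ → Ξ → ℝ) {n : ℕ} (x : Fin (n + 1) → Ξ) : ℝ :=
  ∑ k : Fin n, f (x k.castSucc) (x k.succ)

/-- A path of length `n` from `S` which hits `T` for the first time at time `n`. -/
def FirstHit [DecidableEq Ξ] (S T : Ξ) {n : ℕ} (x : Fin (n + 1) → Ξ) : Prop :=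
  x 0 = S ∧ x (Fin.last n) = T ∧ ∀ k : Fin n, x k.castSucc ≠ T

instance [DecidableEq Ξ] (S T : Ξ) (n : ℕ) :
    DecidablePred (FirstHit S T (n := n)) := fun _ => by
  unfold FirstHit; infer_instance

/-- The value `V_f^S(T)`: the expected path integral of the edge flow `f` along
the canonical Markov chain started at `S`, up to the first hitting time of `T`,
written as a sum over all finite paths first hitting `T` weighted by their
probabilities. -/
noncomputable def pathValue [Fintype Ξ] [DecidableEq Ξ]
    (lam : Ξ → Ξ → ℝ) (f : Ξ → Ξ → ℝ) (S T : Ξ) : ℝ :=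
  ∑' n : ℕ, ∑ x ∈ Finset.univ.filter (FirstHit S T (n := n)),
      pathProb lam x * pathSum f x

set_option linter.unusedSectionVars false
set_option maxHeartbeats 1000000

namespace Stmt12

open Finset

variable {Ξ : Type*} [Fintype Ξ] [DecidableEq Ξ]

noncomputable def Lam (lam : Ξ → Ξ → ℝ) (a : Ξ) : ℝ := ∑ U, lam a U

def Rch (lam : Ξ → Ξ → ℝ) : Ξ → Ξ → Prop :=
  Relation.ReflTransGen (fun x y => 0 < lam x y)

noncomputable def Q (lam : Ξ → Ξ → ℝ) (T : Ξ) : Matrix Ξ Ξ ℝ :=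
  Matrix.of fun a b => if a = T then 0 else transProb lam a b

variable {lam : Ξ → Ξ → ℝ}

lemma transProb_def (a b : Ξ) : transProb lam a b = lam a b / Lam lam a := rfl

section nonneg
variable (hnn : ∀ a b, 0 ≤ lam a b)
include hnn

lemma Lam_nonneg (a : Ξ) : 0 ≤ Lam lam a := Finset.sum_nonneg fun _ _ => hnn _ _

lemma transProb_nonneg (a b : Ξ) : 0 ≤ transProb lam a b :=
  div_nonneg (hnn a b) (Lam_nonneg hnn a)

lemma lam_pos_of_transProb_ne {a b : Ξ} (h : transProb lam a b ≠ 0) : 0 < lam a b := by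
  rcases (hnn a b).lt_or_eq with h1 | h1
  · exact h1
  · exfalso; apply h; rw [transProb_def, ← h1, zero_div]

lemma Lam_pos_of_lam_pos {a b : Ξ} (h : 0 < lam a b) : 0 < Lam lam a :=
  lt_of_lt_of_le h (Finset.single_le_sum (fun c _ => hnn a c) (mem_univ b))

end nonneg

lemma sum_transProb {a : Ξ} (h : 0 < Lam lam a) : ∑ b, transProb lam a b = 1 := by
  simp only [transProb_def, ← Finset.sum_div]
  exact div_self h.ne'

lemma sum_transProb_le_one (hnn : ∀ a b, 0 ≤ lam a b) (a : Ξ) :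
    ∑ b, transProb lam a b ≤ 1 := by
  rcases (Lam_nonneg hnn a).lt_or_eq with h | h
  · rw [sum_transProb h]
  · simp only [transProb_def, ← h, div_zero]
    simp

lemma rch_symm (hsymm : ∀ a b, lam a b = lam b a) {a b : Ξ} (h : Rch lam a b) :
    Rch lam b a :=
  by
    haveI : Std.Symm (fun x y : Ξ => 0 < lam x y) := ⟨fun x y hxy => by rw [hsymm y x]; exact hxy⟩
    exact (Relation.ReflTransGen.symmetric (r := fun x y : Ξ => 0 < lam x y)).symm _ _ h

lemma Q_apply (T a b : Ξ) : Q lam T a b = if a = T then 0 else transProb lam a b := rfl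

lemma Q_nonneg (hnn : ∀ a b, 0 ≤ lam a b) (T a b : Ξ) : 0 ≤ Q lam T a b := by
  rw [Q_apply]; split
  · exact le_rfl
  · exact transProb_nonneg hnn a b

end Stmt12
namespace Stmt12
open Finset
variable {Ξ : Type*} [Fintype Ξ] [DecidableEq Ξ] {lam : Ξ → Ξ → ℝ}

lemma Qpow_nonneg (hnn : ∀ a b, 0 ≤ lam a b) (T : Ξ) :
    ∀ (n : ℕ) (a b : Ξ), 0 ≤ (Q lam T ^ n) a b := by
  intro n
  induction n with
  | zero => intro a b; rw [pow_zero]; rw [Matrix.one_apply]; split <;> norm_num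
  | succ n ih =>
    intro a b
    rw [pow_succ, Matrix.mul_apply]
    exact Finset.sum_nonneg fun c _ => mul_nonneg (ih a c) (Q_nonneg hnn T c b)

lemma Qpow_T_row (T : Ξ) : ∀ (n : ℕ) (b : Ξ), T ≠ b → (Q lam T ^ n) T b = 0 := by
  intro n
  induction n with
  | zero => intro b hb; rw [pow_zero]; exact Matrix.one_apply_ne hb
  | succ n ih =>
    intro b hb
    rw [pow_succ', Matrix.mul_apply]
    apply Finset.sum_eq_zero
    intro c _
    rw [Q_apply, if_pos rfl, zero_mul]

lemma Qpow_rch (hnn : ∀ a b, 0 ≤ lam a b) (T : Ξ) :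
    ∀ (n : ℕ) (a b : Ξ), (Q lam T ^ n) a b ≠ 0 → Rch lam a b := by
  intro n
  induction n with
  | zero =>
    intro a b h
    rw [pow_zero, Matrix.one_apply] at h
    split at h
    · subst ‹a = b›; exact Relation.ReflTransGen.refl
    · exact absurd rfl h
  | succ n ih =>
    intro a b h
    rw [pow_succ', Matrix.mul_apply] at h
    obtain ⟨c, _, hc⟩ := Finset.exists_ne_zero_of_sum_ne_zero h
    have h1 : Q lam T a c ≠ 0 := fun hz => hc (by rw [hz, zero_mul])
    have h2 : (Q lam T ^ n) c b ≠ 0 := fun hz => hc (by rw [hz, mul_zero])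
    have hl : 0 < lam a c := by
      rw [Q_apply] at h1
      split at h1
      · exact absurd rfl h1
      · exact lam_pos_of_transProb_ne hnn h1
    exact Relation.ReflTransGen.head hl (ih c b h2)

end Stmt12
namespace Stmt12
open Finset
variable {Ξ : Type*} [Fintype Ξ] [DecidableEq Ξ] {lam : Ξ → Ξ → ℝ}

lemma sum_paths_cons {M : Type*} [AddCommMonoid M] (n : ℕ) (a : Ξ)
    (F : (Fin (n + 2) → Ξ) → M) :
    (∑ x : Fin (n + 2) → Ξ, if x 0 = a then F x else 0)
      = ∑ y : Fin (n + 1) → Ξ, F (Fin.cons a y) := by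
  rw [← Equiv.sum_comp (Fin.consEquiv (fun _ => Ξ))
      (fun x => if x 0 = a then F x else 0)]
  rw [Fintype.sum_prod_type]
  have : ∀ (c : Ξ) (y : Fin (n+1) → Ξ),
      (Fin.consEquiv (fun _ => Ξ)) (c, y) = Fin.cons c y := fun _ _ => rfl
  simp only [this, Fin.cons_zero]
  rw [Finset.sum_comm]
  simp [Finset.sum_ite_eq]

lemma pathProb_cons (n : ℕ) (c : Ξ) (y : Fin (n + 1) → Ξ) :
    pathProb lam (Fin.cons c y) = transProb lam c (y 0) * pathProb lam y := by
  unfold pathProb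
  rw [Fin.prod_univ_succ]
  simp [← Fin.succ_castSucc, Fin.cons_succ]

lemma pathSum_cons {f : Ξ → Ξ → ℝ} (n : ℕ) (c : Ξ) (y : Fin (n + 1) → Ξ) :
    pathSum f (Fin.cons c y) = f c (y 0) + pathSum f y := by
  unfold pathSum
  rw [Fin.sum_univ_succ]
  simp [← Fin.succ_castSucc, Fin.cons_succ]

lemma firstHit_cons (n : ℕ) (a T c : Ξ) (y : Fin (n + 1) → Ξ) :
    FirstHit a T (Fin.cons c y) ↔
      (c = a ∧ a ≠ T ∧ FirstHit (y 0) T y) := by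
  have hlast : (Fin.cons c y : Fin (n + 2) → Ξ) (Fin.last (n + 1)) = y (Fin.last n) := by
    rw [← Fin.succ_last]
    exact Fin.cons_succ (α := fun _ : Fin (n+2) => Ξ) c y (Fin.last n)
  have havoid : (∀ k : Fin (n + 1), (Fin.cons c y : Fin (n + 2) → Ξ) k.castSucc ≠ T)
      ↔ (c ≠ T ∧ ∀ k : Fin n, y k.castSucc ≠ T) := by
    constructor
    · intro h
      refine ⟨?_, fun k => ?_⟩
      · have := h 0
        rwa [Fin.castSucc_zero, Fin.cons_zero] at this
      · have := h k.succ
        rwa [← Fin.succ_castSucc, Fin.cons_succ] at this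
    · rintro ⟨h0, h1⟩ k
      induction k using Fin.cases with
      | zero => rwa [Fin.castSucc_zero, Fin.cons_zero]
      | succ k => rw [← Fin.succ_castSucc, Fin.cons_succ]; exact h1 k
  unfold FirstHit
  rw [hlast, havoid, Fin.cons_zero]
  constructor
  · rintro ⟨h0, hlast, hc, havd⟩
    subst h0
    exact ⟨rfl, hc, rfl, hlast, havd⟩
  · rintro ⟨rfl, hc, -, hlast, havd⟩
    exact ⟨rfl, hlast, hc, havd⟩

end Stmt12
namespace Stmt12
open Finset
variable {Ξ : Type*} [Fintype Ξ] [DecidableEq Ξ] {lam : Ξ → Ξ → ℝ}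

lemma sum_fiber_firstHit (n : ℕ) (T : Ξ) (G : Ξ → (Fin (n + 1) → Ξ) → ℝ) :
    (∑ y : Fin (n + 1) → Ξ, if FirstHit (y 0) T y then G (y 0) y else 0)
      = ∑ c, ∑ y ∈ univ.filter (FirstHit c T (n := n)), G c y := by
  simp only [Finset.sum_filter]
  rw [Finset.sum_comm]
  apply Finset.sum_congr rfl
  intro y _
  rw [Finset.sum_eq_single (y 0)]
  · intro c _ hc
    rw [if_neg]
    intro hFH
    exact hc hFH.1.symm
  · intro h; exact absurd (Finset.mem_univ _) h

lemma filter_firstHit_self (n : ℕ) (T : Ξ) (x : Fin (n + 2) → Ξ) (h : FirstHit T T x) :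
    False := by
  obtain ⟨h0, -, hav⟩ := h
  exact hav 0 (by rwa [Fin.castSucc_zero])

lemma sum_firstHit_prob (T : Ξ) :
    ∀ (n : ℕ) (a : Ξ),
      (∑ x ∈ univ.filter (FirstHit a T (n := n)), pathProb lam x) = (Q lam T ^ n) a T := by
  intro n
  induction n with
  | zero =>
    intro a
    rw [Finset.sum_filter, pow_zero, Matrix.one_apply]
    rw [← Equiv.sum_comp (Equiv.funUnique (Fin 1) Ξ).symm
        (fun x => if FirstHit a T x then pathProb lam x else 0)]
    have h2 : ∀ c : Ξ, FirstHit a T ((Equiv.funUnique (Fin 1) Ξ).symm c)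
        ↔ (c = a ∧ c = T) := by
      intro c
      unfold FirstHit
      constructor
      · rintro ⟨h0, h1, -⟩; exact ⟨h0, h1⟩
      · rintro ⟨h0, h1⟩; exact ⟨h0, h1, fun k => k.elim0⟩
    have h3 : ∀ c : Ξ, pathProb lam ((Equiv.funUnique (Fin 1) Ξ).symm c) = 1 := by
      intro c; unfold pathProb; simp
    calc (∑ c : Ξ, if FirstHit a T ((Equiv.funUnique (Fin 1) Ξ).symm c)
            then pathProb lam ((Equiv.funUnique (Fin 1) Ξ).symm c) else 0)
        = ∑ c : Ξ, if c = a ∧ c = T then (1:ℝ) else 0 := by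
          apply Finset.sum_congr rfl
          intro c _
          rw [h3]
          by_cases hc : FirstHit a T ((Equiv.funUnique (Fin 1) Ξ).symm c)
          · rw [if_pos hc, if_pos ((h2 c).mp hc)]
          · rw [if_neg hc, if_neg (fun hh => hc ((h2 c).mpr hh))]
      _ = if a = T then 1 else 0 := by
          by_cases haT : a = T
          · subst haT
            rw [if_pos rfl, Finset.sum_eq_single a]
            · simp
            · intro c _ hc; rw [if_neg]; rintro ⟨rfl, -⟩; exact hc rfl
            · intro h; exact absurd (Finset.mem_univ _) h
          · rw [if_neg haT]
            apply Finset.sum_eq_zero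
            intro c _
            rw [if_neg]; rintro ⟨rfl, h⟩; exact haT h
  | succ n ih =>
    intro a
    by_cases haT : a = T
    · rw [Finset.sum_eq_zero, pow_succ', Matrix.mul_apply]
      · symm
        apply Finset.sum_eq_zero
        intro c _
        rw [Q_apply, if_pos haT, zero_mul]
      · intro x hx
        rw [Finset.mem_filter] at hx
        exact absurd (haT ▸ hx.2 : FirstHit T T x) (fun h => filter_firstHit_self n T x h)
    · rw [Finset.sum_filter]
      have step1 : (∑ x : Fin (n + 2) → Ξ, if FirstHit a T x then pathProb lam x else 0)
          = ∑ x : Fin (n + 2) → Ξ,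
              if x 0 = a then (if FirstHit a T x then pathProb lam x else 0) else 0 := by
        apply Finset.sum_congr rfl
        intro x _
        by_cases hx : x 0 = a
        · rw [if_pos hx]
        · rw [if_neg hx, if_neg (fun h => hx h.1)]
      rw [step1, sum_paths_cons]
      have step2 : ∀ y : Fin (n + 1) → Ξ,
          (if FirstHit a T (Fin.cons a y) then pathProb lam (Fin.cons a y) else 0)
            = (if FirstHit (y 0) T y then transProb lam a (y 0) * pathProb lam y else 0) := by
        intro y
        by_cases hy : FirstHit (y 0) T y
        · rw [if_pos ((firstHit_cons n a T a y).mpr ⟨rfl, haT, hy⟩), if_pos hy, pathProb_cons]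
        · rw [if_neg (fun h => hy ((firstHit_cons n a T a y).mp h).2.2), if_neg hy]
      simp only [step2]
      rw [sum_fiber_firstHit n T (fun c y => transProb lam a c * pathProb lam y)]
      rw [pow_succ', Matrix.mul_apply]
      apply Finset.sum_congr rfl
      intro c _
      rw [← Finset.mul_sum, ih c, Q_apply, if_neg haT]

end Stmt12
namespace Stmt12
open Finset
variable {Ξ : Type*} [Fintype Ξ] [DecidableEq Ξ] {lam : Ξ → Ξ → ℝ}

noncomputable def Av (lam f : Ξ → Ξ → ℝ) (T : Ξ) (n : ℕ) (a : Ξ) : ℝ :=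
  ∑ x ∈ univ.filter (FirstHit a T (n := n)), pathProb lam x * pathSum f x

lemma Av_zero (f : Ξ → Ξ → ℝ) (T a : Ξ) : Av lam f T 0 a = 0 := by
  apply Finset.sum_eq_zero
  intro x _
  have : pathSum f x = 0 := by unfold pathSum; simp
  rw [this, mul_zero]

lemma Av_T (f : Ξ → Ξ → ℝ) (T : Ξ) (n : ℕ) : Av lam f T n T = 0 := by
  cases n with
  | zero => exact Av_zero f T T
  | succ n =>
    apply Finset.sum_eq_zero
    intro x hx
    rw [Finset.mem_filter] at hx
    exact absurd hx.2 (fun h => filter_firstHit_self n T x h)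

lemma Av_succ (f : Ξ → Ξ → ℝ) (T : Ξ) (n : ℕ) (a : Ξ) :
    Av lam f T (n + 1) a
      = ∑ c, Q lam T a c * (f a c * (Q lam T ^ n) c T + Av lam f T n c) := by
  by_cases haT : a = T
  · rw [haT, Av_T]
    symm
    apply Finset.sum_eq_zero
    intro c _
    rw [Q_apply, if_pos rfl, zero_mul]
  · unfold Av
    rw [Finset.sum_filter]
    have step1 : (∑ x : Fin (n + 2) → Ξ, if FirstHit a T x then pathProb lam x * pathSum f x else 0)
        = ∑ x : Fin (n + 2) → Ξ,
            if x 0 = a then (if FirstHit a T x then pathProb lam x * pathSum f x else 0) else 0 := by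
      apply Finset.sum_congr rfl
      intro x _
      by_cases hx : x 0 = a
      · rw [if_pos hx]
      · rw [if_neg hx, if_neg (fun h => hx h.1)]
    rw [step1, sum_paths_cons]
    have step2 : ∀ y : Fin (n + 1) → Ξ,
        (if FirstHit a T (Fin.cons a y) then pathProb lam (Fin.cons a y) * pathSum f (Fin.cons a y) else 0)
          = (if FirstHit (y 0) T y then
              transProb lam a (y 0) * (f a (y 0) * pathProb lam y + pathProb lam y * pathSum f y) else 0) := by
      intro y
      by_cases hy : FirstHit (y 0) T y
      · rw [if_pos ((firstHit_cons n a T a y).mpr ⟨rfl, haT, hy⟩), if_pos hy,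
          pathProb_cons, pathSum_cons]
        ring
      · rw [if_neg (fun h => hy ((firstHit_cons n a T a y).mp h).2.2), if_neg hy]
    simp only [step2]
    rw [sum_fiber_firstHit n T (fun c y =>
      transProb lam a c * (f a c * pathProb lam y + pathProb lam y * pathSum f y))]
    apply Finset.sum_congr rfl
    intro c _
    rw [Q_apply, if_neg haT]
    rw [← Finset.mul_sum, Finset.sum_add_distrib, ← Finset.mul_sum, sum_firstHit_prob]

end Stmt12
namespace Stmt12
open Finset
variable {Ξ : Type*} [Fintype Ξ] [DecidableEq Ξ] {lam : Ξ → Ξ → ℝ}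

noncomputable def rs (lam : Ξ → Ξ → ℝ) (T : Ξ) (n : ℕ) (a : Ξ) : ℝ :=
  ∑ b, (Q lam T ^ n) a b

section rslem
variable (hnn : ∀ a b, 0 ≤ lam a b)
include hnn

lemma rs_nonneg (T : Ξ) (n : ℕ) (a : Ξ) : 0 ≤ rs lam T n a :=
  Finset.sum_nonneg fun b _ => Qpow_nonneg hnn T n a b

lemma rs_zero (T a : Ξ) : rs lam T 0 a = 1 := by
  unfold rs
  simp [Matrix.one_apply]

lemma rs_one_le (T a : Ξ) : rs lam T 1 a ≤ 1 := by
  unfold rs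
  rw [pow_one]
  simp only [Q_apply]
  by_cases haT : a = T
  · simp [haT]
  · simp only [if_neg haT]
    exact sum_transProb_le_one hnn a

lemma rs_one_T (T : Ξ) : rs lam T 1 T = 0 := by
  unfold rs
  rw [pow_one]
  apply Finset.sum_eq_zero
  intro b _
  rw [Q_apply, if_pos rfl]

lemma rs_add (T : Ξ) (m n : ℕ) (a : Ξ) :
    rs lam T (m + n) a = ∑ b, (Q lam T ^ m) a b * rs lam T n b := by
  unfold rs
  rw [pow_add]
  simp only [Matrix.mul_apply, Finset.mul_sum]
  rw [Finset.sum_comm]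

lemma rs_le_prev (T : Ξ) (n : ℕ) (a : Ξ) : rs lam T (n + 1) a ≤ rs lam T n a := by
  rw [rs_add hnn]
  have : ∀ b, (Q lam T ^ n) a b * rs lam T 1 b ≤ (Q lam T ^ n) a b := fun b =>
    mul_le_of_le_one_right (Qpow_nonneg hnn T n a b) (rs_one_le hnn T b)
  exact Finset.sum_le_sum fun b _ => this b

lemma rs_le_one (T : Ξ) (n : ℕ) (a : Ξ) : rs lam T n a ≤ 1 := by
  induction n with
  | zero => rw [rs_zero hnn]
  | succ n ih => exact le_trans (rs_le_prev hnn T n a) ih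

lemma rs_mono (T : Ξ) {m n : ℕ} (h : m ≤ n) (a : Ξ) : rs lam T n a ≤ rs lam T m a := by
  induction n with
  | zero => simp_all
  | succ n ih =>
    rcases Nat.lt_or_ge m (n + 1) with h' | h'
    · exact le_trans (rs_le_prev hnn T n a) (ih (Nat.lt_succ_iff.mp h'))
    · have : m = n + 1 := le_antisymm h h'
      rw [this]

lemma rs_hit (T : Ξ) (m : ℕ) (a : Ξ) :
    rs lam T (m + 1) a ≤ rs lam T m a - (Q lam T ^ m) a T := by
  rw [rs_add hnn]
  have h1 : ∀ b, (Q lam T ^ m) a b * rs lam T 1 b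
      ≤ (Q lam T ^ m) a b - (if b = T then (Q lam T ^ m) a b else 0) := by
    intro b
    by_cases hb : b = T
    · subst hb
      rw [if_pos rfl, rs_one_T hnn, mul_zero, sub_self]
    · rw [if_neg hb, sub_zero]
      exact mul_le_of_le_one_right (Qpow_nonneg hnn T m a b) (rs_one_le hnn T b)
  calc (∑ b, (Q lam T ^ m) a b * rs lam T 1 b)
      ≤ ∑ b, ((Q lam T ^ m) a b - (if b = T then (Q lam T ^ m) a b else 0)) :=
        Finset.sum_le_sum fun b _ => h1 b
    _ = rs lam T m a - (Q lam T ^ m) a T := by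
        rw [Finset.sum_sub_distrib, Finset.sum_ite_eq' univ T (fun b => (Q lam T ^ m) a b),
          if_pos (mem_univ T)]
        rfl

lemma exists_hit (T : Ξ) : ∀ (a : Ξ), Rch lam a T → ∃ n, 0 < (Q lam T ^ n) a T := by
  intro a ha
  induction ha using Relation.ReflTransGen.head_induction_on with
  | refl => exact ⟨0, by rw [pow_zero, Matrix.one_apply_eq]; norm_num⟩
  | head hstep htail ih =>
    rename_i x c
    obtain ⟨n, hn⟩ := ih
    by_cases hxT : x = T
    · exact ⟨0, by rw [pow_zero, hxT, Matrix.one_apply_eq]; norm_num⟩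
    · refine ⟨n + 1, ?_⟩
      have hterm : 0 < Q lam T x c * (Q lam T ^ n) c T := by
        apply mul_pos _ hn
        rw [Q_apply, if_neg hxT, transProb_def]
        exact div_pos hstep (Lam_pos_of_lam_pos hnn hstep)
      have hle : Q lam T x c * (Q lam T ^ n) c T ≤ (Q lam T ^ (n + 1)) x T := by
        rw [pow_succ', Matrix.mul_apply]
        exact Finset.single_le_sum
          (fun b _ => mul_nonneg (Q_nonneg hnn T x b) (Qpow_nonneg hnn T n b T))
          (mem_univ c)
      exact lt_of_lt_of_le hterm hle

end rslem
end Stmt12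
namespace Stmt12
open Finset
variable {Ξ : Type*} [Fintype Ξ] [DecidableEq Ξ] {lam : Ξ → Ξ → ℝ}

lemma decay (hnn : ∀ a b, 0 ≤ lam a b) (hsymm : ∀ a b, lam a b = lam b a)
    (S T : Ξ) (hT : Rch lam S T) :
    ∃ (N : ℕ) (α : ℝ), 0 < N ∧ 0 ≤ α ∧ α < 1 ∧
      ∀ n a, Rch lam S a → rs lam T n a ≤ α ^ (n / N) := by
  classical
  set Cf : Finset Ξ := univ.filter (fun a => Rch lam S a) with hCf
  have hmemC : ∀ a, a ∈ Cf ↔ Rch lam S a := by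
    intro a; rw [hCf, Finset.mem_filter]; simp
  have hS : S ∈ Cf := (hmemC S).mpr Relation.ReflTransGen.refl
  have hex : ∀ a : Ξ, ∃ n, (a ∈ Cf → 0 < (Q lam T ^ n) a T) := by
    intro a
    by_cases ha : a ∈ Cf
    · have haT : Rch lam a T :=
        Relation.ReflTransGen.trans (rch_symm hsymm ((hmemC a).mp ha)) hT
      obtain ⟨n, hn⟩ := exists_hit hnn T a haT
      exact ⟨n, fun _ => hn⟩
    · exact ⟨0, fun h => absurd h ha⟩
  choose na hna using hex
  set N : ℕ := 1 + Cf.sup na with hN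
  have hNpos : 0 < N := Nat.lt_of_lt_of_le Nat.one_pos (Nat.le_add_right 1 _)
  have hne : Cf.Nonempty := ⟨S, hS⟩
  set ε : ℝ := Cf.inf' hne (fun a => (Q lam T ^ (na a)) a T) with hε
  have hεpos : 0 < ε := by
    rw [hε, Finset.lt_inf'_iff]
    intro a ha
    exact hna a ha
  set α : ℝ := 1 - ε with hα
  have hα1 : α < 1 := by rw [hα]; linarith
  have hα0 : 0 ≤ α := by
    have h1 : ε ≤ (Q lam T ^ (na S)) S T := Finset.inf'_le _ hS
    have h2 : (Q lam T ^ (na S)) S T ≤ rs lam T (na S) S :=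
      Finset.single_le_sum (fun b _ => Qpow_nonneg hnn T (na S) S b) (mem_univ T)
    have h3 : rs lam T (na S) S ≤ 1 := rs_le_one hnn T (na S) S
    rw [hα]; linarith
  have hkey : ∀ a ∈ Cf, rs lam T N a ≤ α := by
    intro a ha
    have h1 : na a + 1 ≤ N := by
      rw [hN, Nat.add_comm 1 (Cf.sup na)]
      exact Nat.add_le_add_right (Finset.le_sup ha) 1
    have h2 : rs lam T N a ≤ rs lam T (na a + 1) a := rs_mono hnn T h1 a
    have h3 : rs lam T (na a + 1) a ≤ rs lam T (na a) a - (Q lam T ^ (na a)) a T :=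
      rs_hit hnn T (na a) a
    have h4 : rs lam T (na a) a ≤ 1 := rs_le_one hnn T (na a) a
    have h5 : ε ≤ (Q lam T ^ (na a)) a T := Finset.inf'_le _ ha
    rw [hα]; linarith
  refine ⟨N, α, hNpos, hα0, hα1, ?_⟩
  intro n
  induction n using Nat.strong_induction_on with
  | _ n ih =>
    intro a ha
    rcases Nat.lt_or_ge n N with hn | hn
    · rw [Nat.div_eq_of_lt hn, pow_zero]
      exact rs_le_one hnn T n a
    · obtain ⟨m, rfl⟩ : ∃ m, n = N + m := ⟨n - N, by omega⟩
      have hmlt : m < N + m := by omega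
      have h1 : rs lam T (N + m) a = ∑ b, (Q lam T ^ N) a b * rs lam T m b :=
        rs_add hnn T N m a
      have h2 : ∀ b, (Q lam T ^ N) a b * rs lam T m b
          ≤ (Q lam T ^ N) a b * α ^ (m / N) := by
        intro b
        by_cases hb : (Q lam T ^ N) a b = 0
        · rw [hb, zero_mul, zero_mul]
        · have hbC : Rch lam S b :=
            Relation.ReflTransGen.trans ha (Qpow_rch hnn T N a b hb)
          exact mul_le_mul_of_nonneg_left (ih m hmlt b hbC) (Qpow_nonneg hnn T N a b)
      have h3 : rs lam T (N + m) a ≤ rs lam T N a * α ^ (m / N) := by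
        rw [h1]
        have hr : rs lam T N a * α ^ (m / N) = ∑ b, (Q lam T ^ N) a b * α ^ (m / N) := by
          unfold rs; rw [Finset.sum_mul]
        rw [hr]
        exact Finset.sum_le_sum fun b _ => h2 b
      have h4 : rs lam T N a * α ^ (m / N) ≤ α * α ^ (m / N) :=
        mul_le_mul_of_nonneg_right (hkey a ((hmemC a).mpr ha)) (pow_nonneg hα0 _)
      have h5 : (N + m) / N = m / N + 1 := by
        rw [Nat.add_comm N m]
        exact Nat.add_div_right m hNpos
      rw [h5, pow_succ]
      calc rs lam T (N + m) a ≤ α * α ^ (m / N) := le_trans h3 h4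
        _ = α ^ (m / N) * α := mul_comm _ _

lemma summable_geom_div {α : ℝ} (h0 : 0 ≤ α) (h1 : α < 1) (N : ℕ) (hN : 0 < N) :
    Summable (fun n : ℕ => ((n : ℝ) + 1) * α ^ (n / N)) := by
  haveI : NeZero N := ⟨hN.ne'⟩
  rw [← Equiv.summable_iff (Nat.divModEquiv N).symm]
  have heq : ∀ p : ℕ × Fin N,
      ((fun n : ℕ => ((n : ℝ) + 1) * α ^ (n / N)) ∘ (Nat.divModEquiv N).symm) p
        = (((p.1 * N + (p.2 : ℕ) : ℕ) : ℝ) + 1) * α ^ p.1 := by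
    intro p
    have : ((Nat.divModEquiv N).symm p : ℕ) = p.1 * N + (p.2 : ℕ) := rfl
    simp only [Function.comp_apply, this]
    congr 1
    rw [Nat.add_comm, Nat.add_mul_div_right _ _ hN, Nat.div_eq_of_lt p.2.isLt, Nat.zero_add]
  have hbound : ∀ p : ℕ × Fin N,
      (((p.1 * N + (p.2 : ℕ) : ℕ) : ℝ) + 1) * α ^ p.1
        ≤ ((N : ℝ) + 1) * (((p.1 : ℝ) + 1) * α ^ p.1) := by
    intro p
    have hc : (((p.1 * N + (p.2 : ℕ) : ℕ) : ℝ) + 1) ≤ ((N : ℝ) + 1) * ((p.1 : ℝ) + 1) := by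
      have h2 : ((p.2 : ℕ) : ℝ) ≤ (N : ℝ) - 1 := by
        have := p.2.isLt
        have : ((p.2 : ℕ) : ℝ) ≤ (N : ℝ) - 1 := by
          push_cast
          have : ((p.2 : ℕ) : ℝ) + 1 ≤ (N : ℝ) := by exact_mod_cast Nat.succ_le_of_lt p.2.isLt
          linarith
        exact this
      push_cast
      nlinarith [Nat.cast_nonneg (α := ℝ) p.1, Nat.cast_nonneg (α := ℝ) N]
    calc (((p.1 * N + (p.2 : ℕ) : ℕ) : ℝ) + 1) * α ^ p.1
        ≤ (((N : ℝ) + 1) * (((p.1 : ℝ)) + 1)) * α ^ p.1 :=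
          mul_le_mul_of_nonneg_right hc (pow_nonneg h0 _)
      _ = ((N : ℝ) + 1) * (((p.1 : ℝ) + 1) * α ^ p.1) := by ring
  have hsumbase : Summable (fun q : ℕ => ((q : ℝ) + 1) * α ^ q) := by
    have hgeo : Summable (fun q : ℕ => α ^ q) := summable_geometric_of_lt_one h0 h1
    have hpow : Summable (fun q : ℕ => (q : ℝ) * α ^ q) := by
      have := summable_pow_mul_geometric_of_norm_lt_one 1 (r := α)
        (by rw [Real.norm_eq_abs, abs_of_nonneg h0]; exact h1)
      simpa using this
    have := hpow.add hgeo
    apply this.congr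
    intro q; ring
  have hsum2 : Summable (fun p : ℕ × Fin N => ((N : ℝ) + 1) * (((p.1 : ℝ) + 1) * α ^ p.1)) := by
    rw [summable_prod_of_nonneg]
    · constructor
      · intro q
        exact .of_finite
      · have : ∀ q : ℕ, (∑' _ : Fin N, ((N : ℝ) + 1) * (((q : ℝ) + 1) * α ^ q))
            = (N : ℝ) * (((N : ℝ) + 1) * (((q : ℝ) + 1) * α ^ q)) := by
          intro q
          rw [tsum_fintype]
          simp [Finset.sum_const, nsmul_eq_mul]
        rw [funext this]
        exact ((hsumbase.mul_left ((N : ℝ) + 1)).mul_left (N : ℝ))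
    · intro p
      positivity
  apply Summable.of_nonneg_of_le _ _ hsum2
  · intro p
    rw [heq]
    positivity
  · intro p
    rw [heq]
    exact hbound p

end Stmt12
namespace Stmt12
open Finset
variable {Ξ : Type*} [Fintype Ξ] [DecidableEq Ξ] {lam : Ξ → Ξ → ℝ}

noncomputable def gg (lam : Ξ → Ξ → ℝ) (T a b : Ξ) : ℝ := ∑' n : ℕ, (Q lam T ^ n) a b

section green
variable (hnn : ∀ a b, 0 ≤ lam a b) (hsymm : ∀ a b, lam a b = lam b a)
variable (S T : Ξ) (hT : Rch lam S T)
include hnn hsymm hT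

lemma summable_Qpow {a : Ξ} (ha : Rch lam S a) (b : Ξ) :
    Summable (fun n => (Q lam T ^ n) a b) := by
  obtain ⟨N, α, hN, hα0, hα1, hbd⟩ := decay hnn hsymm S T hT
  apply Summable.of_nonneg_of_le (fun n => Qpow_nonneg hnn T n a b) _
    (summable_geom_div hα0 hα1 N hN)
  intro n
  have h1 : (Q lam T ^ n) a b ≤ rs lam T n a :=
    Finset.single_le_sum (fun c _ => Qpow_nonneg hnn T n a c) (mem_univ b)
  have h2 : rs lam T n a ≤ α ^ (n / N) := hbd n a ha
  have h3 : α ^ (n / N) ≤ ((n : ℝ) + 1) * α ^ (n / N) := by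
    have : (0:ℝ) ≤ α ^ (n / N) := pow_nonneg hα0 _
    nlinarith [Nat.cast_nonneg (α := ℝ) n]
  linarith

lemma gg_forward {a : Ξ} (ha : Rch lam S a) (b : Ξ) :
    gg lam T a b = (if a = b then 1 else 0) + ∑ c, Q lam T a c * gg lam T c b := by
  rw [gg, Summable.tsum_eq_zero_add (summable_Qpow hnn hsymm S T hT ha b)]
  have h0 : (Q lam T ^ 0) a b = (if a = b then (1:ℝ) else 0) := by
    rw [pow_zero, Matrix.one_apply]
  rw [h0]
  congr 1
  · have h1 : ∀ n : ℕ, (Q lam T ^ (n + 1)) a b = ∑ c, Q lam T a c * (Q lam T ^ n) c b := by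
      intro n; rw [pow_succ', Matrix.mul_apply]
    rw [tsum_congr h1, Summable.tsum_finsetSum]
    · exact Finset.sum_congr rfl fun c _ => tsum_mul_left
    · intro c _
      by_cases hq : Q lam T a c = 0
      · simp only [hq, zero_mul]
        exact summable_zero
      · have hl : 0 < lam a c := by
          rw [Q_apply] at hq
          split at hq
          · exact absurd rfl hq
          · exact lam_pos_of_transProb_ne hnn hq
        exact (summable_Qpow hnn hsymm S T hT (ha.tail hl) b).mul_left _

lemma gg_backward {a : Ξ} (ha : Rch lam S a) (b : Ξ) :
    gg lam T a b = (if a = b then 1 else 0) + ∑ c, gg lam T a c * Q lam T c b := by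
  rw [gg, Summable.tsum_eq_zero_add (summable_Qpow hnn hsymm S T hT ha b)]
  have h0 : (Q lam T ^ 0) a b = (if a = b then (1:ℝ) else 0) := by
    rw [pow_zero, Matrix.one_apply]
  rw [h0]
  congr 1
  · have h1 : ∀ n : ℕ, (Q lam T ^ (n + 1)) a b = ∑ c, (Q lam T ^ n) a c * Q lam T c b := by
      intro n; rw [pow_succ, Matrix.mul_apply]
    rw [tsum_congr h1, Summable.tsum_finsetSum]
    · exact Finset.sum_congr rfl fun c _ => tsum_mul_right
    · intro c _
      exact (summable_Qpow hnn hsymm S T hT ha c).mul_right _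

omit hnn hsymm hT in
lemma gg_T_row (b : Ξ) : gg lam T T b = if T = b then 1 else 0 := by
  rw [gg, tsum_eq_single 0]
  · rw [pow_zero, Matrix.one_apply]
  · intro n hn
    obtain ⟨m, rfl⟩ : ∃ m, n = m + 1 := ⟨n - 1, by omega⟩
    rw [pow_succ', Matrix.mul_apply]
    apply Finset.sum_eq_zero
    intro c _
    rw [Q_apply, if_pos rfl, zero_mul]

lemma killed_unique (u : Ξ → ℝ)
    (hu : ∀ a, Rch lam S a → u a = ∑ c, Q lam T a c * u c) :
    ∀ a, Rch lam S a → u a = 0 := by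
  obtain ⟨N, α, hN, hα0, hα1, hbd⟩ := decay hnn hsymm S T hT
  have iter : ∀ n a, Rch lam S a → u a = ∑ c, (Q lam T ^ n) a c * u c := by
    intro n
    induction n with
    | zero =>
      intro a ha
      simp [Matrix.one_apply, ite_mul, Finset.sum_ite_eq]
    | succ n ih =>
      intro a ha
      rw [hu a ha]
      have h1 : ∀ c, Q lam T a c * u c = Q lam T a c * (∑ d, (Q lam T ^ n) c d * u d) := by
        intro c
        by_cases hq : Q lam T a c = 0
        · rw [hq, zero_mul, zero_mul]
        · have hl : 0 < lam a c := by
            rw [Q_apply] at hq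
            split at hq
            · exact absurd rfl hq
            · exact lam_pos_of_transProb_ne hnn hq
          rw [ih c (ha.tail hl)]
      rw [Finset.sum_congr rfl fun c _ => h1 c]
      simp only [Finset.mul_sum]
      rw [Finset.sum_comm]
      apply Finset.sum_congr rfl
      intro d _
      rw [pow_succ', Matrix.mul_apply, Finset.sum_mul]
      exact Finset.sum_congr rfl fun c _ => by ring
  intro a ha
  set U : ℝ := ∑ c, |u c| with hU
  have hU0 : 0 ≤ U := Finset.sum_nonneg fun c _ => abs_nonneg _
  have hb : ∀ n, |u a| ≤ α ^ (n / N) * U := by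
    intro n
    rw [iter n a ha]
    calc |∑ c, (Q lam T ^ n) a c * u c| ≤ ∑ c, |(Q lam T ^ n) a c * u c| :=
          Finset.abs_sum_le_sum_abs _ _
      _ = ∑ c, (Q lam T ^ n) a c * |u c| := by
          apply Finset.sum_congr rfl
          intro c _
          rw [abs_mul, abs_of_nonneg (Qpow_nonneg hnn T n a c)]
      _ ≤ ∑ c, (Q lam T ^ n) a c * U := by
          apply Finset.sum_le_sum
          intro c _
          exact mul_le_mul_of_nonneg_left
            (Finset.single_le_sum (fun d _ => abs_nonneg (u d)) (mem_univ c))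
            (Qpow_nonneg hnn T n a c)
      _ = rs lam T n a * U := by rw [rs, Finset.sum_mul]
      _ ≤ α ^ (n / N) * U := mul_le_mul_of_nonneg_right (hbd n a ha) hU0
  have hsum : Summable (fun n : ℕ => α ^ (n / N) * U) := by
    apply Summable.mul_right
    apply Summable.of_nonneg_of_le (fun n => pow_nonneg hα0 _) _
      (summable_geom_div hα0 hα1 N hN)
    intro n
    have : (0:ℝ) ≤ α ^ (n / N) := pow_nonneg hα0 _
    nlinarith [Nat.cast_nonneg (α := ℝ) n]
  have htend : Filter.Tendsto (fun n : ℕ => α ^ (n / N) * U) Filter.atTop (nhds 0) :=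
    hsum.tendsto_atTop_zero
  have : |u a| ≤ 0 := ge_of_tendsto' htend hb
  exact abs_eq_zero.mp (le_antisymm this (abs_nonneg _))

end green
end Stmt12
namespace Stmt12
open Finset
variable {Ξ : Type*} [Fintype Ξ] [DecidableEq Ξ] {lam : Ξ → Ξ → ℝ}

section green2
variable (hnn : ∀ a b, 0 ≤ lam a b) (hsymm : ∀ a b, lam a b = lam b a)
variable (S : Ξ) (hpos : ∀ a, Rch lam S a → 0 < Lam lam a)
variable (T : Ξ) (hT : Rch lam S T)
include hnn hsymm hT

omit hsymm hT in
lemma gg_nonneg (a b : Ξ) : 0 ≤ gg lam T a b :=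
  tsum_nonneg fun n => Qpow_nonneg hnn T n a b

omit hsymm hT in
lemma gg_zero_of_not_rch {a b : Ξ} (h : ¬ Rch lam a b) : gg lam T a b = 0 := by
  rw [gg]
  convert tsum_zero with n
  by_contra hne
  exact h (Qpow_rch hnn T n a b hne)

include hpos in
lemma hit_one : ∀ a, Rch lam S a → gg lam T a T = 1 := by
  have key := killed_unique hnn hsymm S T hT (fun a => gg lam T a T - 1) ?_
  · intro a ha
    have := key a ha
    linarith
  · intro a ha
    show gg lam T a T - 1 = ∑ c, Q lam T a c * (gg lam T c T - 1)
    by_cases haT : a = T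
    · rw [haT, gg_T_row, if_pos rfl, sub_self]
      symm
      apply Finset.sum_eq_zero
      intro c _
      rw [Q_apply, if_pos rfl, zero_mul]
    · have hfwd := gg_forward hnn hsymm S T hT ha T
      rw [if_neg haT, zero_add] at hfwd
      have hrow : ∑ c, Q lam T a c = 1 := by
        have : ∀ c, Q lam T a c = transProb lam a c := by
          intro c; rw [Q_apply, if_neg haT]
        rw [Finset.sum_congr rfl fun c _ => this c]
        exact sum_transProb (hpos a ha)
      calc gg lam T a T - 1 = (∑ c, Q lam T a c * gg lam T c T) - (∑ c, Q lam T a c) := by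
            rw [← hfwd, hrow]
        _ = ∑ c, Q lam T a c * (gg lam T c T - 1) := by
            rw [← Finset.sum_sub_distrib]
            exact Finset.sum_congr rfl fun c _ => by ring

include hpos in
lemma Qpow_symm : ∀ (n : ℕ) (a b : Ξ), Rch lam S a → Rch lam S b → a ≠ T → b ≠ T →
    Lam lam a * (Q lam T ^ n) a b = Lam lam b * (Q lam T ^ n) b a := by
  intro n
  induction n with
  | zero =>
    intro a b ha hb haT hbT
    by_cases hab : a = b
    · subst hab; rfl
    · rw [pow_zero, Matrix.one_apply_ne hab, Matrix.one_apply_ne (Ne.symm hab),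
        mul_zero, mul_zero]
  | succ n ih =>
    intro a b ha hb haT hbT
    have key : ∀ c, Lam lam a * (Q lam T a c * (Q lam T ^ n) c b)
        = Lam lam b * ((Q lam T ^ n) b c * Q lam T c a) := by
      intro c
      by_cases hlac : lam a c = 0
      · have h1 : Q lam T a c = 0 := by
          rw [Q_apply, if_neg haT, transProb_def, hlac, zero_div]
        have h2 : Q lam T c a = 0 := by
          rw [Q_apply]
          split
          · rfl
          · rw [transProb_def, hsymm c a, hlac, zero_div]
        rw [h1, h2]
        ring
      · have hl : 0 < lam a c := (hnn a c).lt_of_ne (Ne.symm hlac)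
        have hc : Rch lam S c := ha.tail hl
        by_cases hcT : c = T
        · have h2 : (Q lam T ^ n) c b = 0 := by
            rw [hcT]; exact Qpow_T_row T n b (Ne.symm hbT)
          have h3 : Q lam T c a = 0 := by rw [Q_apply, if_pos hcT]
          rw [h2, h3]
          ring
        · have hIH := ih c b hc hb hcT hbT
          rw [Q_apply, if_neg haT, Q_apply, if_neg hcT, transProb_def, transProb_def,
            hsymm c a]
          have hΛa := (hpos a ha).ne'
          have hΛc := (hpos c hc).ne'
          field_simp
          nlinarith [hIH]
    have hL : (Q lam T ^ (n+1)) a b = ∑ c, Q lam T a c * (Q lam T ^ n) c b := by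
      rw [pow_succ', Matrix.mul_apply]
    have hR : (Q lam T ^ (n+1)) b a = ∑ c, (Q lam T ^ n) b c * Q lam T c a := by
      rw [pow_succ, Matrix.mul_apply]
    rw [hL, hR, Finset.mul_sum, Finset.mul_sum]
    exact Finset.sum_congr rfl fun c _ => key c

include hpos in
lemma gg_symm {a b : Ξ} (ha : Rch lam S a) (hb : Rch lam S b) (haT : a ≠ T) (hbT : b ≠ T) :
    Lam lam a * gg lam T a b = Lam lam b * gg lam T b a := by
  rw [gg, gg, ← tsum_mul_left, ← tsum_mul_left]
  exact tsum_congr fun n => Qpow_symm hnn hsymm S hpos T hT n a b ha hb haT hbT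

end green2
end Stmt12
namespace Stmt12
open Finset
variable {Ξ : Type*} [Fintype Ξ] [DecidableEq Ξ] {lam : Ξ → Ξ → ℝ}

noncomputable def phi (lam f : Ξ → Ξ → ℝ) (a : Ξ) : ℝ := ∑ c, transProb lam a c * f a c

lemma pathProb_nonneg (hnn : ∀ a b, 0 ≤ lam a b) {n : ℕ} (x : Fin (n + 1) → Ξ) :
    0 ≤ pathProb lam x :=
  Finset.prod_nonneg fun k _ => transProb_nonneg hnn _ _

section value
variable (hnn : ∀ a b, 0 ≤ lam a b) (hsymm : ∀ a b, lam a b = lam b a)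
variable (S : Ξ) (hpos : ∀ a, Rch lam S a → 0 < Lam lam a)
variable (T : Ξ) (hT : Rch lam S T) (f : Ξ → Ξ → ℝ)
include hnn hsymm hT

lemma summable_Av {a : Ξ} (ha : Rch lam S a) : Summable (fun n => Av lam f T n a) := by
  obtain ⟨N, α, hN, hα0, hα1, hbd⟩ := decay hnn hsymm S T hT
  set F : ℝ := ∑ c, ∑ d, |f c d| with hF
  have hF0 : 0 ≤ F := Finset.sum_nonneg fun c _ => Finset.sum_nonneg fun d _ => abs_nonneg _
  have hfF : ∀ c d, |f c d| ≤ F := by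
    intro c d
    calc |f c d| ≤ ∑ d', |f c d'| :=
          Finset.single_le_sum (f := fun d' => |f c d'|) (fun d' _ => abs_nonneg _) (mem_univ d)
      _ ≤ F := by
          rw [hF]
          exact Finset.single_le_sum (f := fun c' => ∑ d', |f c' d'|)
            (fun c' _ => Finset.sum_nonneg fun d' _ => abs_nonneg _) (mem_univ c)
  have hw : ∀ (n : ℕ) (x : Fin (n + 1) → Ξ), |pathSum f x| ≤ (n : ℝ) * F := by
    intro n x
    calc |pathSum f x| ≤ ∑ k : Fin n, |f (x k.castSucc) (x k.succ)| :=
          Finset.abs_sum_le_sum_abs _ _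
      _ ≤ ∑ _k : Fin n, F := Finset.sum_le_sum fun k _ => hfF _ _
      _ = (n : ℝ) * F := by rw [Finset.sum_const, Finset.card_univ, Fintype.card_fin,
            nsmul_eq_mul]
  have hAv : ∀ n, |Av lam f T n a| ≤ ((n : ℝ) + 1) * (F * α ^ (n / N)) := by
    intro n
    have h1 : |Av lam f T n a| ≤ ∑ x ∈ univ.filter (FirstHit a T (n := n)),
        pathProb lam x * ((n : ℝ) * F) := by
      calc |Av lam f T n a| ≤ ∑ x ∈ univ.filter (FirstHit a T (n := n)),
            |pathProb lam x * pathSum f x| := Finset.abs_sum_le_sum_abs _ _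
        _ ≤ ∑ x ∈ univ.filter (FirstHit a T (n := n)), pathProb lam x * ((n : ℝ) * F) := by
            apply Finset.sum_le_sum
            intro x _
            rw [abs_mul, abs_of_nonneg (pathProb_nonneg hnn x)]
            exact mul_le_mul_of_nonneg_left (hw n x) (pathProb_nonneg hnn x)
    rw [← Finset.sum_mul, sum_firstHit_prob] at h1
    have h2 : (Q lam T ^ n) a T * ((n : ℝ) * F) ≤ α ^ (n / N) * ((n : ℝ) * F) := by
      apply mul_le_mul_of_nonneg_right _ (by positivity)
      calc (Q lam T ^ n) a T ≤ rs lam T n a :=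
            Finset.single_le_sum (fun c _ => Qpow_nonneg hnn T n a c) (mem_univ T)
        _ ≤ α ^ (n / N) := hbd n a ha
    calc |Av lam f T n a| ≤ α ^ (n / N) * ((n : ℝ) * F) := le_trans h1 h2
      _ ≤ ((n : ℝ) + 1) * (F * α ^ (n / N)) := by
          have h3 : (0:ℝ) ≤ α ^ (n / N) := pow_nonneg hα0 _
          nlinarith [Nat.cast_nonneg (α := ℝ) n]
  have hg : Summable (fun n : ℕ => ((n : ℝ) + 1) * (F * α ^ (n / N))) := by
    apply ((summable_geom_div hα0 hα1 N hN).mul_right F).congr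
    intro n
    ring
  apply Summable.of_norm_bounded hg
  intro n
  rw [Real.norm_eq_abs]
  exact hAv n

include hpos in
lemma value_eq :
    pathValue lam f S T
      = ∑ b, gg lam T S b * (if b = T then 0 else phi lam f b) := by
  classical
  set VV : Ξ → ℝ := fun a => ∑' n, Av lam f T n a with hVV
  set uu : Ξ → ℝ := fun a => ∑ b, gg lam T a b * (if b = T then 0 else phi lam f b) with huu
  have hstep : ∀ a c : Ξ, Q lam T a c ≠ 0 → Rch lam S a → Rch lam S c := by
    intro a c hq ha
    refine ha.tail ?_
    rw [Q_apply] at hq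
    split at hq
    · exact absurd rfl hq
    · exact lam_pos_of_transProb_ne hnn hq
  have hVVeq : ∀ a, Rch lam S a →
      VV a = (if a = T then 0 else phi lam f a) + ∑ c, Q lam T a c * VV c := by
    intro a ha
    rw [hVV]
    simp only
    rw [Summable.tsum_eq_zero_add (summable_Av hnn hsymm S T hT f ha), Av_zero, zero_add]
    have h1 : ∀ n : ℕ, Av lam f T (n + 1) a
        = ∑ c, Q lam T a c * (f a c * (Q lam T ^ n) c T + Av lam f T n c) :=
      fun n => Av_succ f T n a
    rw [tsum_congr h1, Summable.tsum_finsetSum]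
    · have h2 : ∀ c, (∑' n, Q lam T a c * (f a c * (Q lam T ^ n) c T + Av lam f T n c))
          = Q lam T a c * f a c * gg lam T c T + Q lam T a c * VV c := by
        intro c
        by_cases hq : Q lam T a c = 0
        · simp only [hq, zero_mul, zero_add, zero_mul]
          rw [tsum_zero]  -- plus fix
        · have hc : Rch lam S c := hstep a c hq ha
          rw [tsum_mul_left, Summable.tsum_add ((summable_Qpow hnn hsymm S T hT hc T).mul_left (f a c))
            (summable_Av hnn hsymm S T hT f hc), tsum_mul_left]
          rw [hVV]
          simp only [gg]
          ring
      rw [Finset.sum_congr rfl fun c _ => h2 c, Finset.sum_add_distrib]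
      congr 1
      by_cases haT : a = T
      · rw [if_pos haT]
        apply Finset.sum_eq_zero
        intro c _
        rw [Q_apply, if_pos haT, zero_mul, zero_mul]
      · rw [if_neg haT]
        unfold phi
        apply Finset.sum_congr rfl
        intro c _
        by_cases hq : Q lam T a c = 0
        · have : transProb lam a c = 0 := by
            have := hq
            rwa [Q_apply, if_neg haT] at this
          rw [hq, this]
          ring
        · have hc : Rch lam S c := hstep a c hq ha
          rw [hit_one hnn hsymm S hpos T hT c hc, mul_one, Q_apply, if_neg haT]
    · intro c _
      by_cases hq : Q lam T a c = 0
      · simp only [hq, zero_mul]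
        exact summable_zero
      · have hc : Rch lam S c := hstep a c hq ha
        exact (((summable_Qpow hnn hsymm S T hT hc T).mul_left (f a c)).add
          (summable_Av hnn hsymm S T hT f hc)).mul_left _
  have huueq : ∀ a, Rch lam S a →
      uu a = (if a = T then 0 else phi lam f a) + ∑ c, Q lam T a c * uu c := by
    intro a ha
    rw [huu]
    simp only
    have h1 : ∀ b, gg lam T a b * (if b = T then 0 else phi lam f b)
        = (if a = b then 1 else 0) * (if b = T then 0 else phi lam f b)
          + ∑ c, Q lam T a c * (gg lam T c b * (if b = T then 0 else phi lam f b)) := by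
      intro b
      rw [gg_forward hnn hsymm S T hT ha b, add_mul, Finset.sum_mul]
      congr 1
      exact Finset.sum_congr rfl fun c _ => by ring
    rw [Finset.sum_congr rfl fun b _ => h1 b, Finset.sum_add_distrib]
    congr 1
    · rw [Finset.sum_eq_single a]
      · rw [if_pos rfl, one_mul]
      · intro b _ hb
        rw [if_neg (Ne.symm hb), zero_mul]
      · intro h
        exact absurd (mem_univ a) h
    · rw [Finset.sum_comm]
      apply Finset.sum_congr rfl
      intro c _
      rw [← Finset.mul_sum]
  have hzero := killed_unique hnn hsymm S T hT (fun a => VV a - uu a) ?_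
  · have hS' : Rch lam S S := Relation.ReflTransGen.refl
    have h2 : VV S - uu S = 0 := hzero S hS'
    have h3 : pathValue lam f S T = VV S := rfl
    rw [h3]
    show VV S = uu S
    linarith
  · intro a ha
    show VV a - uu a = ∑ c, Q lam T a c * (VV c - uu c)
    rw [hVVeq a ha, huueq a ha]
    rw [Finset.sum_congr rfl (fun c _ => mul_sub (Q lam T a c) (VV c) (uu c)),
      Finset.sum_sub_distrib]
    ring

end value
end Stmt12

open Stmt12

/-- The path-integral value function solves the discrete Poisson equation: for the
canonical Markov chain on a weighted graph `(G, λ)` and any antisymmetric edge flow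
`f`, the function `T ↦ V_f^S(T)` satisfies `d*d V_f^S = d* f` on the connected
component containing `S`. -/
theorem stmt_12 [Fintype Ξ] [DecidableEq Ξ]
    (lam : Ξ → Ξ → ℝ) (hsymm : ∀ a b, lam a b = lam b a)
    (hnonneg : ∀ a b, 0 ≤ lam a b) (hirrefl : ∀ a, lam a a = 0)
    (f : Ξ → Ξ → ℝ) (hf : ∀ a b, f b a = -f a b)
    (S : Ξ) :
    ∀ S' : Ξ, Relation.ReflTransGen (fun x y => 0 < lam x y) S S' →
      ∑ T : Ξ, lam T S' * (pathValue lam f S S' - pathValue lam f S T)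
        = ∑ T : Ξ, lam T S' * f T S' := by
  intro S' hreach
  classical
  set hnn := hnonneg with hnnh
  by_cases hΛ0 : Lam lam S' = 0
  · have hz : ∀ U, lam S' U = 0 := by
      intro U
      have := (Finset.sum_eq_zero_iff_of_nonneg (fun c _ => hnn S' c)).mp hΛ0
      exact this U (mem_univ U)
    rw [Finset.sum_eq_zero fun T _ => by rw [hsymm T S', hz T, zero_mul],
      Finset.sum_eq_zero fun T _ => by rw [hsymm T S', hz T, zero_mul]]
  · have hΛS' : 0 < Lam lam S' := (Lam_nonneg hnn S').lt_of_ne (Ne.symm hΛ0)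
    have hpos : ∀ a, Rch lam S a → 0 < Lam lam a := by
      intro a ha
      by_cases haS' : a = S'
      · rw [haS']; exact hΛS'
      · have hr : Rch lam a S' := (rch_symm hsymm ha).trans hreach
        rcases Relation.ReflTransGen.cases_head hr with heq | ⟨c, hstep, -⟩
        · exact absurd heq haS'
        · exact Lam_pos_of_lam_pos hnn hstep
    have hSS : Rch lam S S := Relation.ReflTransGen.refl
    have hΛS : 0 < Lam lam S := hpos S hSS
    set Cf : Finset Ξ := univ.filter (fun b => Rch lam S b) with hCf
    have hmemC : ∀ b, b ∈ Cf ↔ Rch lam S b := by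
      intro b; rw [hCf, Finset.mem_filter]; simp
    have hS'C : Rch lam S S' := hreach
    set φ : Ξ → ℝ := phi lam f with hφ
    set ψ : Ξ → ℝ := fun b => Lam lam b * φ b with hψ
    -- (K1)
    have hK1 : ∑ b ∈ Cf, ψ b = 0 := by
      have hψb : ∀ b, Rch lam S b → ψ b = ∑ c, lam b c * f b c := by
        intro b hb
        rw [hψ]
        simp only
        rw [hφ]
        unfold phi
        rw [Finset.mul_sum]
        apply Finset.sum_congr rfl
        intro c _
        rw [transProb_def]
        have hΛb := (hpos b hb).ne'
        field_simp
      have h1 : ∑ b ∈ Cf, ψ b = ∑ b ∈ Cf, ∑ c ∈ Cf, lam b c * f b c := by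
        apply Finset.sum_congr rfl
        intro b hb
        rw [hψb b ((hmemC b).mp hb)]
        symm
        apply Finset.sum_subset (Finset.subset_univ Cf)
        intro c _ hc
        by_cases hl : lam b c = 0
        · rw [hl, zero_mul]
        · exfalso
          apply hc
          rw [hmemC]
          exact ((hmemC b).mp hb).tail ((hnn b c).lt_of_ne (Ne.symm hl))
      have h2 : (∑ b ∈ Cf, ∑ c ∈ Cf, lam b c * f b c)
          = - ∑ b ∈ Cf, ∑ c ∈ Cf, lam b c * f b c := by
        nth_rewrite 1 [Finset.sum_comm]
        rw [← Finset.sum_neg_distrib]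
        apply Finset.sum_congr rfl
        intro b _
        rw [← Finset.sum_neg_distrib]
        apply Finset.sum_congr rfl
        intro c _
        rw [hsymm c b, hf b c]
        ring
      rw [h1]
      linarith [h2]
    -- (K2)
    have hK2 : ∀ T, Rch lam S T →
        Lam lam S * pathValue lam f S T = ∑ b, ψ b * gg lam T b S := by
      intro T hT
      rw [value_eq hnn hsymm S hpos T hT f, Finset.mul_sum]
      by_cases hTS : T = S
      · have hL : ∀ b, Lam lam S * (gg lam T S b * (if b = T then 0 else phi lam f b)) = 0 := by
          intro b
          by_cases hbT : b = T
          · rw [if_pos hbT, mul_zero, mul_zero]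
          · have hg : gg lam T S b = 0 := by
              rw [hTS, gg_T_row, if_neg (fun h : S = b => hbT (by rw [← h, hTS]))]
            rw [hg, zero_mul, mul_zero]
        rw [Finset.sum_eq_zero fun b _ => hL b]
        symm
        have hR : ∀ b, ψ b * gg lam T b S = if b ∈ Cf then ψ b else 0 := by
          intro b
          by_cases hb : Rch lam S b
          · have hg : gg lam T b S = 1 := by
              rw [hTS]
              exact hit_one hnn hsymm S hpos S hSS b hb
            rw [hg, mul_one, if_pos ((hmemC b).mpr hb)]
          · rw [gg_zero_of_not_rch hnn T (fun h => hb (rch_symm hsymm h)), mul_zero,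
              if_neg (fun h => hb ((hmemC b).mp h))]
        rw [Finset.sum_congr rfl fun b _ => hR b, Finset.sum_ite_mem, Finset.univ_inter]
        exact hK1
      · have hST : S ≠ T := fun h => hTS h.symm
        apply Finset.sum_congr rfl
        intro b _
        by_cases hbT : b = T
        · rw [if_pos hbT, mul_zero, mul_zero, hbT, gg_T_row, if_neg hTS, mul_zero]
        · by_cases hb : Rch lam S b
          · rw [if_neg hbT]
            have hsy := gg_symm hnn hsymm S hpos T hT hSS hb hST hbT
            rw [hψ]
            simp only
            linear_combination (φ b) * hsy
          · rw [gg_zero_of_not_rch hnn T (a := S) hb,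
              gg_zero_of_not_rch hnn T (a := b) (b := S)
                (fun h => hb (rch_symm hsymm h)), mul_zero, zero_mul, mul_zero]
    -- (K3)
    have hK3 : ∀ T b, Rch lam S T → Rch lam S b →
        gg lam T b S - ∑ c, transProb lam b c * gg lam T c S
          = (if b = S then 1 else 0)
            - Lam lam S / Lam lam T * (if b = T then 1 else 0) := by
      intro T b hT hb
      by_cases hbT : b = T
      · rw [if_pos hbT, hbT]
        by_cases hTS : T = S
        · rw [hTS]
          have hggd : gg lam S S S = 1 := by rw [gg_T_row, if_pos rfl]
          have hsum : ∑ c, transProb lam S c * gg lam S c S = 1 := by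
            have h1 : ∀ c, transProb lam S c * gg lam S c S = transProb lam S c := by
              intro c
              by_cases hq : transProb lam S c = 0
              · rw [hq, zero_mul]
              · have hc : Rch lam S c := hSS.tail (lam_pos_of_transProb_ne hnn hq)
                rw [hit_one hnn hsymm S hpos S hSS c hc, mul_one]
            rw [Finset.sum_congr rfl fun c _ => h1 c]
            exact sum_transProb hΛS
          rw [hggd, hsum, if_pos rfl, div_self hΛS.ne']
          ring
        · have hgg0 : gg lam T T S = 0 := by rw [gg_T_row, if_neg hTS]
          have hflip : ∀ c, transProb lam T c * gg lam T c S
              = Lam lam S / Lam lam T * (gg lam T S c * Q lam T c T) := by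
            intro c
            by_cases hlc : lam T c = 0
            · have h1 : transProb lam T c = 0 := by rw [transProb_def, hlc, zero_div]
              have h2 : Q lam T c T = 0 := by
                rw [Q_apply]
                split
                · rfl
                · rw [transProb_def, hsymm c T, hlc, zero_div]
              rw [h1, h2, zero_mul, mul_zero, mul_zero]
            · have hl : 0 < lam T c := (hnn T c).lt_of_ne (Ne.symm hlc)
              have hc : Rch lam S c := hT.tail hl
              have hcT : c ≠ T := by
                intro h
                rw [h, hirrefl T] at hlc
                exact hlc rfl
              have hST : S ≠ T := fun h => hTS h.symm
              have hsy := gg_symm hnn hsymm S hpos T hT hc hSS hcT hST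
              have hΛT := (hpos T hT).ne'
              have hΛc := (hpos c hc).ne'
              rw [Q_apply, if_neg hcT, transProb_def, transProb_def, hsymm c T]
              field_simp
              linear_combination hsy
          rw [Finset.sum_congr rfl fun c _ => hflip c, ← Finset.mul_sum]
          have hbwd := gg_backward hnn hsymm S T hT hSS T
          have hSb : (if S = T then (1:ℝ) else 0) = 0 := by
            rw [if_neg (fun h => hTS h.symm)]
          rw [hSb, zero_add] at hbwd
          have hhit : gg lam T S T = 1 := hit_one hnn hsymm S hpos T hT S hSS
          have hsumc : ∑ c, gg lam T S c * Q lam T c T = 1 := by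
            rw [← hbwd]
            exact hhit
          rw [hgg0, hsumc, if_neg hTS]
      · have hfwd := gg_forward hnn hsymm S T hT hb S
        have h1 : ∑ c, Q lam T b c * gg lam T c S = ∑ c, transProb lam b c * gg lam T c S := by
          apply Finset.sum_congr rfl
          intro c _
          rw [Q_apply, if_neg hbT]
        rw [h1] at hfwd
        rw [if_neg hbT, mul_zero, sub_zero]
        linarith [hfwd]
    -- Θ and its harmonicity
    set Θ : Ξ → ℝ := fun b =>
      (∑ T', transProb lam S' T' * gg lam T' b S) - gg lam S' b S with hΘ
    have hrowΘ : ∀ b, Rch lam S b →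
        Θ b - ∑ c, transProb lam b c * Θ c
          = Lam lam S / Lam lam S' * ((if b = S' then 1 else 0) - transProb lam b S') := by
      intro b hb
      have hswap : ∑ c, transProb lam b c * Θ c
          = (∑ T', transProb lam S' T' * ∑ c, transProb lam b c * gg lam T' c S)
            - ∑ c, transProb lam b c * gg lam S' c S := by
        rw [hΘ]
        simp only
        rw [Finset.sum_congr rfl (fun c _ => mul_sub (transProb lam b c) _ _),
          Finset.sum_sub_distrib]
        congr 1
        have hmm : ∀ x, transProb lam b x * ∑ T', transProb lam S' T' * gg lam T' x S
            = ∑ T', transProb lam S' T' * (transProb lam b x * gg lam T' x S) := by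
          intro x
          rw [Finset.mul_sum]
          exact Finset.sum_congr rfl fun T' _ => by ring
        rw [Finset.sum_congr rfl fun x _ => hmm x, Finset.sum_comm]
        exact Finset.sum_congr rfl fun T' _ => by rw [Finset.mul_sum]
      rw [hΘ]
      simp only
      rw [hswap]
      have hperT : ∀ T', transProb lam S' T' * gg lam T' b S
          - transProb lam S' T' * ∑ c, transProb lam b c * gg lam T' c S
          = transProb lam S' T' * ((if b = S then 1 else 0)
              - Lam lam S / Lam lam T' * (if b = T' then 1 else 0)) := by
        intro T'
        by_cases hp : transProb lam S' T' = 0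
        · rw [hp, zero_mul, zero_mul, zero_mul, sub_zero]
        · have hT' : Rch lam S T' := hreach.tail (lam_pos_of_transProb_ne hnn hp)
          rw [← mul_sub, hK3 T' b hT' hb]
      have hsum1 : ∑ T', (transProb lam S' T' * gg lam T' b S
          - transProb lam S' T' * ∑ c, transProb lam b c * gg lam T' c S)
          = (if b = S then 1 else 0)
            - transProb lam S' b * (Lam lam S / Lam lam b) := by
        rw [Finset.sum_congr rfl fun T' _ => hperT T']
        rw [Finset.sum_congr rfl fun T' _ =>
          mul_sub (transProb lam S' T') _ _, Finset.sum_sub_distrib]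
        congr 1
        · rw [← Finset.sum_mul, sum_transProb hΛS', one_mul]
        · rw [Finset.sum_eq_single b]
          · rw [if_pos rfl, mul_one]
          · intro T' _ hT'b
            rw [if_neg (Ne.symm hT'b), mul_zero, mul_zero]
          · intro h; exact absurd (mem_univ b) h
      have hKS' := hK3 S' b hreach hb
      have hpb : transProb lam S' b * (Lam lam S / Lam lam b)
          = Lam lam S / Lam lam S' * transProb lam b S' := by
        rw [transProb_def, transProb_def, hsymm S' b]
        have hΛb := (hpos b hb).ne'
        field_simp
      calc (∑ T', transProb lam S' T' * gg lam T' b S) - gg lam S' b S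
            - ((∑ T', transProb lam S' T' * ∑ c, transProb lam b c * gg lam T' c S)
              - ∑ c, transProb lam b c * gg lam S' c S)
          = (∑ T', (transProb lam S' T' * gg lam T' b S
              - transProb lam S' T' * ∑ c, transProb lam b c * gg lam T' c S))
            - (gg lam S' b S - ∑ c, transProb lam b c * gg lam S' c S) := by
            rw [Finset.sum_sub_distrib]
            ring
        _ = ((if b = S then 1 else 0) - transProb lam S' b * (Lam lam S / Lam lam b))
            - ((if b = S then 1 else 0)
              - Lam lam S / Lam lam S' * (if b = S' then 1 else 0)) := by
            rw [hsum1, hKS']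
        _ = Lam lam S / Lam lam S' * ((if b = S' then 1 else 0) - transProb lam b S') := by
            rw [hpb]
            ring
    -- Θ' constant on C
    set Θ' : Ξ → ℝ := fun b => Θ b - Lam lam S / Lam lam S' * (if b = S' then 1 else 0)
      with hΘ'
    have hharm : ∀ b, Rch lam S b → Θ' b = ∑ c, transProb lam b c * Θ' c := by
      intro b hb
      rw [hΘ']
      simp only
      have h1 : ∑ c, transProb lam b c
          * (Θ c - Lam lam S / Lam lam S' * (if c = S' then 1 else 0))
          = (∑ c, transProb lam b c * Θ c)
            - Lam lam S / Lam lam S' * transProb lam b S' := by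
        rw [Finset.sum_congr rfl fun c _ => mul_sub (transProb lam b c) _ _,
          Finset.sum_sub_distrib]
        congr 1
        rw [Finset.sum_eq_single S']
        · rw [if_pos rfl, mul_one]
          ring
        · intro c _ hc
          rw [if_neg hc, mul_zero, mul_zero]
        · intro h; exact absurd (mem_univ S') h
      rw [h1]
      have h2 := hrowΘ b hb
      have h3 : Θ' b = Θ b - Lam lam S / Lam lam S' * (if b = S' then 1 else 0) := rfl
      linear_combination h2
    have hconst : ∀ b, Rch lam S b → Θ' b = Θ' S' := by
      have hu := killed_unique hnn hsymm S S' hreach (fun b => Θ' b - Θ' S') ?_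
      · intro b hb
        have h2 : Θ' b - Θ' S' = 0 := hu b hb
        linarith
      · intro b hb
        show Θ' b - Θ' S' = ∑ c, Q lam S' b c * (Θ' c - Θ' S')
        by_cases hbS' : b = S'
        · rw [hbS', sub_self]
          symm
          apply Finset.sum_eq_zero
          intro c _
          rw [Q_apply, if_pos rfl, zero_mul]
        · have h1 : ∀ c, Q lam S' b c * (Θ' c - Θ' S')
              = transProb lam b c * Θ' c - transProb lam b c * Θ' S' := by
            intro c
            rw [Q_apply, if_neg hbS']
            ring
          rw [Finset.sum_congr rfl fun c _ => h1 c, Finset.sum_sub_distrib,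
            ← Finset.sum_mul, sum_transProb (hpos b hb), one_mul, ← hharm b hb]
    -- final sums
    have hΘ0 : ∀ b, ¬ Rch lam S b → Θ b = 0 := by
      intro b hb
      rw [hΘ]
      simp only
      rw [gg_zero_of_not_rch hnn S' (fun h => hb (rch_symm hsymm h))]
      rw [Finset.sum_eq_zero fun T' _ => by
        rw [gg_zero_of_not_rch hnn T' (a := b) (b := S)
          (fun h => hb (rch_symm hsymm h)), mul_zero]]
      rw [sub_zero]
    have hsum1 : ∑ b, ψ b * Θ b = Lam lam S * φ S' := by
      have h1 : ∑ b, ψ b * Θ b = ∑ b ∈ Cf, ψ b * Θ b := by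
        symm
        apply Finset.sum_subset (Finset.subset_univ Cf)
        intro b _ hb
        rw [hΘ0 b (fun h => hb ((hmemC b).mpr h)), mul_zero]
      have h2 : ∀ b ∈ Cf, ψ b * Θ b
          = ψ b * Θ' S' + ψ b * (Lam lam S / Lam lam S' * (if b = S' then 1 else 0)) := by
        intro b hbm
        have hb := (hmemC b).mp hbm
        have h3 : Θ b - Lam lam S / Lam lam S' * (if b = S' then 1 else 0) = Θ' S' :=
          hconst b hb
        have h4 : Θ b = Θ' S' + Lam lam S / Lam lam S' * (if b = S' then 1 else 0) := by
          linarith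
        rw [h4]
        ring
      rw [h1, Finset.sum_congr rfl h2, Finset.sum_add_distrib, ← Finset.sum_mul, hK1,
        zero_mul, zero_add]
      rw [Finset.sum_eq_single_of_mem S' ((hmemC S').mpr hreach)]
      · rw [if_pos rfl, mul_one, hψ]
        simp only
        have hΛS'ne := hΛS'.ne'
        field_simp
      · intro b _ hb
        rw [if_neg hb, mul_zero, mul_zero]
    have hsum2 : ∑ b, ψ b * Θ b
        = (∑ T', transProb lam S' T' * (Lam lam S * pathValue lam f S T'))
          - Lam lam S * pathValue lam f S S' := by
      rw [hΘ]
      simp only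
      rw [Finset.sum_congr rfl fun b _ => mul_sub (ψ b) _ _, Finset.sum_sub_distrib]
      congr 1
      · have hmm : ∀ x, ψ x * ∑ T', transProb lam S' T' * gg lam T' x S
            = ∑ T', transProb lam S' T' * (ψ x * gg lam T' x S) := by
          intro x
          rw [Finset.mul_sum]
          exact Finset.sum_congr rfl fun T' _ => by ring
        rw [Finset.sum_congr rfl fun x _ => hmm x, Finset.sum_comm]
        apply Finset.sum_congr rfl
        intro T' _
        by_cases hp : transProb lam S' T' = 0
        · simp [hp]
        · have hT' : Rch lam S T' := hreach.tail (lam_pos_of_transProb_ne hnn hp)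
          rw [hK2 T' hT', Finset.mul_sum]
      · exact (hK2 S' hreach).symm
    have hfin : pathValue lam f S S'
        - ∑ T', transProb lam S' T' * pathValue lam f S T' = - φ S' := by
      have h1 : Lam lam S * (pathValue lam f S S'
          - ∑ T', transProb lam S' T' * pathValue lam f S T')
          = Lam lam S * (- φ S') := by
        have h2 : (∑ T', transProb lam S' T' * (Lam lam S * pathValue lam f S T'))
            = Lam lam S * ∑ T', transProb lam S' T' * pathValue lam f S T' := by
          rw [Finset.mul_sum]
          exact Finset.sum_congr rfl fun T' _ => by ring
        rw [h2] at hsum2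
        rw [hsum1] at hsum2
        linear_combination hsum2
      exact mul_left_cancel₀ hΛS.ne' h1
    -- conclude
    have hlamTS' : ∀ T, lam T S' = Lam lam S' * transProb lam S' T := by
      intro T
      rw [hsymm T S', transProb_def]
      field_simp
    calc ∑ T, lam T S' * (pathValue lam f S S' - pathValue lam f S T)
        = ∑ T, (Lam lam S' * (transProb lam S' T * pathValue lam f S S')
            - Lam lam S' * (transProb lam S' T * pathValue lam f S T)) := by
          apply Finset.sum_congr rfl
          intro T _
          rw [hlamTS' T]
          ring
      _ = Lam lam S' * (pathValue lam f S S'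
            - ∑ T, transProb lam S' T * pathValue lam f S T) := by
          rw [Finset.sum_sub_distrib, ← Finset.mul_sum, ← Finset.mul_sum,
            ← Finset.sum_mul, sum_transProb hΛS']
          ring
      _ = Lam lam S' * (- φ S') := by rw [hfin]
      _ = ∑ T, lam T S' * f T S' := by
          rw [hφ]
          unfold phi
          rw [mul_neg, Finset.mul_sum, ← Finset.sum_neg_distrib]
          apply Finset.sum_congr rfl
          intro T _
          rw [hlamTS' T, hf S' T]
          ring
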